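/- Let n ≥ 2 and 0 ≤ k ≤ n−2 be natural numbers. Let S_k ⊆ ℝ^n denote the origin {0} if k = 0, and the unit k-sphere {y ∈ ℝ^n : ‖y‖ = 1 and y_j = 0 for all indices j ≥ k+1} if k ≥ 1; fix x ∈ ℝ^n with x ∉ S_k. Then every homotopy class is realized by a totally real embedding: for every continuous map G : OnePoint(ℝ^n) → {y : ℝ^n // y ∉ S_k} with G(∞) = x, there exists a C^∞ topological embedding f : ℝ^n → ℝ^n × ℝ^n with everywhere injective derivative such that (i) for some compact set K ⊆ ℝ^n, f(u) = (x,u) for all u ∉ K (f coincides with the cotangent fiber over x near infinity); (ii) f is totally real: for every u, the image P of the derivative of f at u satisfies P ∩ J(P) = {0}, where J(q,p) = (−p, q); (iii) (f(u)).1 ∉ S_k for every u; and (iv) the continuous extension f_f : OnePoint(ℝ^n) → {y : ℝ^n // y ∉ S_k} of u ↦ (f(u)).1 with f_f(∞) = x is homotopic to G. -/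

import Mathlib

open scoped RealInnerProductSpace
open OnePoint

noncomputable section

/-- `ℝ^n` as Euclidean space. -/
abbrev Euc (n : ℕ) : Type := EuclideanSpace ℝ (Fin n)

/-- The standard complex structure `J(q,p) = (−p, q)` on `ℝ^n × ℝ^n`, as a linear map. -/
def Jstd (n : ℕ) : (Euc n × Euc n) →ₗ[ℝ] (Euc n × Euc n) :=
  LinearMap.prod (-(LinearMap.snd ℝ (Euc n) (Euc n))) (LinearMap.fst ℝ (Euc n) (Euc n))

/-- `S_k ⊆ ℝ^n`: the origin if `k = 0`, and the unit `k`-sphere in the coordinate subspace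
`ℝ^{k+1} ⊆ ℝ^n` if `k ≥ 1`. -/
def SkSet (n k : ℕ) : Set (Euc n) :=
  if k = 0 then {0}
  else {y : Euc n | ‖y‖ = 1 ∧ ∀ j : Fin n, k + 1 ≤ (j : ℕ) → y j = 0}

open Metric MeasureTheory Filter Function Set Topology
open scoped Convolution

lemma isClosed_SkSet (n k : ℕ) : IsClosed (SkSet n k) := by
  unfold SkSet
  split
  · exact isClosed_singleton
  · have : {y : Euc n | ‖y‖ = 1 ∧ ∀ j : Fin n, k + 1 ≤ (j : ℕ) → y j = 0}
        = {y : Euc n | ‖y‖ = 1} ∩ ⋂ (j : Fin n) (_ : k + 1 ≤ (j : ℕ)), {y : Euc n | y j = 0} := by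
      ext y; simp [Set.mem_iInter]
    rw [this]
    exact (isClosed_eq continuous_norm continuous_const).inter
      (isClosed_iInter fun j => isClosed_iInter fun _ =>
        isClosed_eq (EuclideanSpace.proj (𝕜 := ℝ) j).continuous continuous_const)

lemma smooth_approx {n : ℕ} (h : Euc n → Euc n) (hc : Continuous h) (hs : HasCompactSupport h)
    {ε : ℝ} (hε : 0 < ε) :
    ∃ h' : Euc n → Euc n, ContDiff ℝ (⊤ : ℕ∞) h' ∧ HasCompactSupport h' ∧
      ∀ u, dist (h' u) (h u) ≤ ε := by
  have hu : UniformContinuous h := hs.uniformContinuous_of_continuous hc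
  obtain ⟨r, hr, hball⟩ := Metric.uniformContinuous_iff.1 hu ε hε
  set φ : ContDiffBump (0 : Euc n) := ⟨r / 2, r, by linarith, by linarith⟩ with hφ
  refine ⟨(φ.normed volume) ⋆[ContinuousLinearMap.lsmul ℝ ℝ, volume] h, ?_, ?_, ?_⟩
  · exact (φ.hasCompactSupport_normed (μ := volume)).contDiff_convolution_left _
      (φ.contDiff_normed (μ := volume)) hc.locallyIntegrable
  · exact (φ.hasCompactSupport_normed (μ := volume)).convolution _ hs
  · intro u
    refine ContDiffBump.dist_normed_convolution_le hc.aestronglyMeasurable ?_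
    intro y hy
    have : dist y u < r := by simpa [hφ] using hy
    exact (hball this).le

lemma continuous_onePoint_prod {n : ℕ} {Z : Type} [TopologicalSpace Z] (x : Euc n)
    (h : Z × Euc n → Euc n) (hh : Continuous h)
    (hinf : ∀ ε : ℝ, 0 < ε → ∃ K : Set (Euc n), IsCompact K ∧
      ∀ z u, u ∉ K → dist (h (z, u)) x ≤ ε) :
    Continuous fun p : Z × OnePoint (Euc n) => p.2.elim x fun u => h (p.1, u) := by
  rw [continuous_iff_continuousAt]
  rintro ⟨z, w⟩
  induction w using OnePoint.rec with
  | infty =>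
      rw [ContinuousAt]
      have hval : (((∞ : OnePoint (Euc n)).elim x fun u => h (z, u))) = x := rfl
      rw [hval, Metric.tendsto_nhds]
      intro ε hε
      obtain ⟨K, hK, hKe⟩ := hinf (ε / 2) (by linarith)
      have hopen : IsOpen ((((↑) : Euc n → OnePoint (Euc n)) '' K)ᶜ) :=
        OnePoint.isOpen_compl_image_coe.2 ⟨hK.isClosed, hK⟩
      have hmem : (∞ : OnePoint (Euc n)) ∈ ((((↑) : Euc n → OnePoint (Euc n)) '' K)ᶜ) :=
        OnePoint.infty_notMem_image_coe
      filter_upwards [prod_mem_nhds univ_mem (hopen.mem_nhds hmem)] with p hp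
      obtain ⟨z', w'⟩ := p
      induction w' using OnePoint.rec with
      | infty => simpa using hε
      | coe u =>
          have hu : u ∉ K := fun hu => hp.2 (mem_image_of_mem _ hu)
          have : ((OnePoint.some u).elim x fun v => h (z', v)) = h (z', u) := rfl
          rw [this]
          calc dist (h (z', u)) x ≤ ε / 2 := hKe _ _ hu
          _ < ε := by linarith
  | coe u =>
      have hoe : IsOpenEmbedding fun q : Z × Euc n => (q.1, (q.2 : OnePoint (Euc n))) :=
        IsOpenEmbedding.id.prodMap OnePoint.isOpenEmbedding_coe
      have h2 : ContinuousAt ((fun p : Z × OnePoint (Euc n) => p.2.elim x fun u => h (p.1, u)) ∘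
          fun q : Z × Euc n => (q.1, (q.2 : OnePoint (Euc n)))) (z, u) := by
        have heq : ((fun p : Z × OnePoint (Euc n) => p.2.elim x fun u => h (p.1, u)) ∘
            fun q : Z × Euc n => (q.1, (q.2 : OnePoint (Euc n)))) = h := by
          funext q; rfl
        rw [heq]; exact hh.continuousAt
      exact hoe.continuousAt_iff.1 h2

lemma homotopic_ext {n k : ℕ} (x : Euc n) (hx : x ∉ SkSet n k)
    (F₀ F₁ : C(OnePoint (Euc n), {y : Euc n // y ∉ SkSet n k}))
    (h : unitInterval × Euc n → Euc n) (hh : Continuous h)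
    (hS : ∀ p, h p ∉ SkSet n k)
    (h0 : ∀ u : Euc n, h (0, u) = (F₀ u : Euc n))
    (h1 : ∀ u : Euc n, h (1, u) = (F₁ u : Euc n))
    (hF0 : F₀ ∞ = ⟨x, hx⟩) (hF1 : F₁ ∞ = ⟨x, hx⟩)
    (hinf : ∀ ε : ℝ, 0 < ε → ∃ K : Set (Euc n), IsCompact K ∧
      ∀ (t : unitInterval) (u : Euc n), u ∉ K → dist (h (t, u)) x ≤ ε) :
    F₀.Homotopic F₁ := by
  have hmem : ∀ p : unitInterval × OnePoint (Euc n),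
      (p.2.elim x fun u => h (p.1, u)) ∉ SkSet n k := by
    rintro ⟨t, w⟩
    induction w using OnePoint.rec with
    | infty => exact hx
    | coe u => exact hS (t, u)
  refine ⟨⟨⟨fun p => ⟨p.2.elim x fun u => h (p.1, u), hmem p⟩, ?_⟩, ?_, ?_⟩⟩
  · exact (continuous_onePoint_prod x h hh fun ε hε => by
      obtain ⟨K, hK, hKe⟩ := hinf ε hε; exact ⟨K, hK, hKe⟩).subtype_mk _
  · intro w
    induction w using OnePoint.rec with
    | infty => exact Subtype.ext (by simpa using congrArg Subtype.val hF0.symm)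
    | coe u => exact Subtype.ext (h0 u)
  · intro w
    induction w using OnePoint.rec with
    | infty => exact Subtype.ext (by simpa using congrArg Subtype.val hF1.symm)
    | coe u => exact Subtype.ext (h1 u)

def mkMap {n k : ℕ} (x : Euc n) (hx : x ∉ SkSet n k) (g : Euc n → Euc n)
    (hg : Continuous g) (hgS : ∀ u, g u ∉ SkSet n k) (K : Set (Euc n)) (hK : IsCompact K)
    (hKg : ∀ u ∉ K, g u = x) : C(OnePoint (Euc n), {y : Euc n // y ∉ SkSet n k}) :=
  OnePoint.continuousMapMk ⟨fun u => ⟨g u, hgS u⟩, hg.subtype_mk _⟩ ⟨x, hx⟩ <| by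
    have hev : ∀ᶠ u in coclosedCompact (Euc n),
        (⟨g u, hgS u⟩ : {y : Euc n // y ∉ SkSet n k}) = ⟨x, hx⟩ := by
      rw [Filter.eventually_iff, hasBasis_coclosedCompact.mem_iff]
      exact ⟨K, ⟨hK.isClosed, hK⟩, fun u hu => Subtype.ext (hKg u hu)⟩
    exact Tendsto.congr' (by filter_upwards [hev] with u hu using hu.symm) tendsto_const_nhds

lemma mkMap_coe {n k : ℕ} (x : Euc n) (hx : x ∉ SkSet n k) (g : Euc n → Euc n)
    (hg : Continuous g) (hgS : ∀ u, g u ∉ SkSet n k) (K : Set (Euc n)) (hK : IsCompact K)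
    (hKg : ∀ u ∉ K, g u = x) (u : Euc n) :
    (mkMap x hx g hg hgS K hK hKg (u : OnePoint (Euc n)) : Euc n) = g u := rfl

lemma mkMap_infty {n k : ℕ} (x : Euc n) (hx : x ∉ SkSet n k) (g : Euc n → Euc n)
    (hg : Continuous g) (hgS : ∀ u, g u ∉ SkSet n k) (K : Set (Euc n)) (hK : IsCompact K)
    (hKg : ∀ u ∉ K, g u = x) :
    mkMap x hx g hg hgS K hK hKg ∞ = ⟨x, hx⟩ := rfl

set_option maxHeartbeats 2000000 in
/-- **Lemma 7.1.** Every homotopy class of maps `S^n → ℝ^n \\ S_k` is realized by the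
projection of a totally real embedding of `ℝ^n` into `T*ℝ^n` that agrees with the cotangent
fiber over `x` near infinity and avoids the cotangent fibers over `S_k`. -/
theorem exists_totally_real_embedding_realizing_homotopy_class
    (n k : ℕ) (hn : 2 ≤ n) (hk : k + 2 ≤ n)
    (x : Euc n) (hx : x ∉ SkSet n k)
    (G : C(OnePoint (Euc n), {y : Euc n // y ∉ SkSet n k}))
    (hG : G ∞ = ⟨x, hx⟩) :
    ∃ (f : Euc n → Euc n × Euc n) (K : Set (Euc n)),
      -- f is a C^∞ topological embedding with everywhere injective derivative
      ContDiff ℝ (⊤ : ℕ∞) f ∧ Topology.IsEmbedding f ∧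
      (∀ u : Euc n, Function.Injective (fderiv ℝ f u)) ∧
      -- (i) f coincides with the cotangent fiber over x outside a compact set
      IsCompact K ∧ (∀ u ∉ K, f u = (x, u)) ∧
      -- (ii) f is totally real: P ∩ J(P) = {0} for P the image of the derivative
      (∀ u : Euc n,
        (LinearMap.range (fderiv ℝ f u).toLinearMap ⊓
          Submodule.map (Jstd n) (LinearMap.range (fderiv ℝ f u).toLinearMap) :
          Submodule ℝ (Euc n × Euc n)) = ⊥) ∧
      -- (iii) f avoids the cotangent fibers over S_k
      (∀ u : Euc n, (f u).1 ∉ SkSet n k) ∧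
      -- (iv) the continuous extension of pr ∘ f to OnePoint ℝ^n is homotopic to G
      ∃ F : C(OnePoint (Euc n), {y : Euc n // y ∉ SkSet n k}),
        (∀ u : Euc n, (F (u : OnePoint (Euc n)) : Euc n) = (f u).1) ∧
        F ∞ = ⟨x, hx⟩ ∧
        F.Homotopic G := by
  classical
  have hSc : IsClosed (SkSet n k) := isClosed_SkSet n k
  obtain ⟨δ, hδ, hδS⟩ := Metric.isOpen_iff.1 hSc.isOpen_compl x hx
  set Gv : Euc n → Euc n := fun u => (G (u : OnePoint (Euc n)) : Euc n) with hGvdef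
  have hGv : Continuous Gv :=
    (continuous_subtype_val.comp G.continuous).comp OnePoint.continuous_coe
  have hGvS : ∀ u, Gv u ∉ SkSet n k := fun u => (G (u : OnePoint (Euc n))).2
  have hGtend : Tendsto Gv (coclosedCompact (Euc n)) (𝓝 x) := by
    have h1 : Continuous fun z : OnePoint (Euc n) => ((G z : Euc n)) :=
      continuous_subtype_val.comp G.continuous
    have h2 := ((OnePoint.continuous_iff
      (fun z : OnePoint (Euc n) => ((G z : Euc n)))).1 h1).1
    have h3 : ((G ∞ : Euc n)) = x := by rw [hG]
    rwa [h3] at h2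
  have htail : ∀ ε : ℝ, 0 < ε → ∃ K : Set (Euc n), IsCompact K ∧
      ∀ u : Euc n, u ∉ K → dist (Gv u) x ≤ ε := by
    intro ε hε
    have hmem := hGtend (Metric.closedBall_mem_nhds x hε)
    rw [Filter.mem_map, Filter.hasBasis_coclosedCompact.mem_iff] at hmem
    obtain ⟨t, ⟨htc, htk⟩, hts⟩ := hmem
    exact ⟨t, htk, fun u hu => by simpa [Metric.mem_closedBall] using hts hu⟩
  obtain ⟨C, hCk, hC⟩ := htail (δ / 2) (by linarith)
  obtain ⟨R, hR1, hR⟩ := hCk.isBounded.subset_closedBall_lt 0 0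
  set φb : ContDiffBump (0 : Euc n) := ⟨R, R + 1, hR1, by linarith⟩ with hφb
  set χ : Euc n → ℝ := fun u => φb u with hχ
  have hχ1 : ∀ u ∈ C, χ u = 1 := fun u hu =>
    φb.one_of_mem_closedBall (hR hu)
  have hχ0 : ∀ u, 0 ≤ χ u := fun u => φb.nonneg
  have hχle : ∀ u, χ u ≤ 1 := fun u => φb.le_one
  have hχout : ∀ u : Euc n, R + 1 ≤ ‖u‖ → χ u = 0 := by
    intro u hu
    have h2 : u ∉ Function.support φb := by
      rw [φb.support_eq]
      simp only [Metric.mem_ball, dist_zero_right, not_lt]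
      exact hu
    simpa [hχ] using Function.notMem_support.1 h2
  set g₂ : Euc n → Euc n := fun u => x + χ u • (Gv u - x) with hg₂def
  have hg₂c : Continuous g₂ :=
    continuous_const.add (φb.continuous.smul (hGv.sub continuous_const))
  have key : ∀ (u : Euc n) (s : ℝ), 0 ≤ s → s ≤ 1 → (u ∈ C → s = 1) →
      x + s • (Gv u - x) ∉ SkSet n k := by
    intro u s h0 h1 hC1
    by_cases hu : u ∈ C
    · rw [hC1 hu, one_smul]
      have h2 : x + (Gv u - x) = Gv u := by abel
      rw [h2]; exact hGvS u
    · intro hmem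
      have hdist : dist (x + s • (Gv u - x)) x < δ := by
        rw [dist_eq_norm]
        have h2 : x + s • (Gv u - x) - x = s • (Gv u - x) := by abel
        rw [h2, norm_smul, Real.norm_of_nonneg h0]
        have h3 : ‖Gv u - x‖ = dist (Gv u) x := by rw [dist_eq_norm]
        have h4 := hC u hu
        nlinarith [norm_nonneg (Gv u - x), h3 ▸ h4]
      exact hδS (Metric.mem_ball.2 hdist) hmem
  have hg₂S : ∀ u, g₂ u ∉ SkSet n k := fun u =>
    key u (χ u) (hχ0 u) (hχle u) (fun hu => hχ1 u hu)
  set B : Set (Euc n) := Metric.closedBall (0 : Euc n) (R + 1) with hBdef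
  have hBk : IsCompact B := isCompact_closedBall _ _
  have hg₂out : ∀ u ∉ B, g₂ u = x := by
    intro u hu
    have h2 : R + 1 ≤ ‖u‖ := by
      simp only [hBdef, Metric.mem_closedBall, dist_zero_right, not_le] at hu
      exact hu.le
    simp [hg₂def, hχout u h2]
  set F₂ := mkMap x hx g₂ hg₂c hg₂S B hBk hg₂out with hF₂def
  have hom1 : G.Homotopic F₂ := by
    refine homotopic_ext x hx G F₂
      (fun p => x + ((1 - (p.1 : ℝ)) + (p.1 : ℝ) * χ p.2) • (Gv p.2 - x)) ?_ ?_ ?_ ?_ hG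
      (mkMap_infty x hx g₂ hg₂c hg₂S B hBk hg₂out) ?_
    · exact continuous_const.add
        (((continuous_const.sub (continuous_subtype_val.comp continuous_fst)).add
          ((continuous_subtype_val.comp continuous_fst).mul
            (φb.continuous.comp continuous_snd))).smul
          ((hGv.comp continuous_snd).sub continuous_const))
    · rintro ⟨t, u⟩
      refine key u _ ?_ ?_ ?_
      · nlinarith [t.2.1, t.2.2, hχ0 u]
      · nlinarith [t.2.1, t.2.2, hχ0 u, hχle u]
      · intro hu; rw [hχ1 u hu]; push_cast; ring
    · intro u
      have h2 : x + ((1 - ((0 : unitInterval) : ℝ)) + ((0 : unitInterval) : ℝ) * χ u) • (Gv u - x)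
          = Gv u := by
        push_cast
        rw [show (1 - 0 + 0 * χ u : ℝ) = 1 by ring, one_smul]; abel
      exact h2
    · intro u
      rw [mkMap_coe]
      push_cast
      rw [show (1 - 1 + 1 * χ u : ℝ) = χ u by ring]
    · intro ε hε
      obtain ⟨K, hKk, hKe⟩ := htail ε hε
      refine ⟨K, hKk, fun t u hu => ?_⟩
      have h2 : x + ((1 - (t : ℝ)) + (t : ℝ) * χ u) • (Gv u - x) - x
          = ((1 - (t : ℝ)) + (t : ℝ) * χ u) • (Gv u - x) := by abel
      rw [dist_eq_norm, h2, norm_smul]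
      have hc0 : (0 : ℝ) ≤ (1 - (t : ℝ)) + (t : ℝ) * χ u := by
        nlinarith [t.2.1, t.2.2, hχ0 u]
      have hc1 : (1 - (t : ℝ)) + (t : ℝ) * χ u ≤ 1 := by
        nlinarith [t.2.1, t.2.2, hχ0 u, hχle u]
      rw [Real.norm_of_nonneg hc0]
      have h3 : ‖Gv u - x‖ = dist (Gv u) x := by rw [dist_eq_norm]
      nlinarith [norm_nonneg (Gv u - x), h3 ▸ hKe u hu]
  set T : Set (Euc n) := g₂ '' B ∪ {x} with hTdef
  have hTk : IsCompact T := (hBk.image hg₂c).union isCompact_singleton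
  have hTS : T ⊆ (SkSet n k)ᶜ := by
    rintro y (⟨u, _, rfl⟩ | rfl)
    · exact hg₂S u
    · exact hx
  obtain ⟨δ₁, hδ₁, hδ₁S⟩ := hTk.exists_thickening_subset_open hSc.isOpen_compl hTS
  have hg₂T : ∀ u, g₂ u ∈ T := by
    intro u
    by_cases hu : u ∈ B
    · exact Or.inl ⟨u, hu, rfl⟩
    · rw [hg₂out u hu]; exact Or.inr rfl
  have hnear : ∀ (u : Euc n) (y : Euc n), dist y (g₂ u) ≤ δ₁ / 2 → y ∉ SkSet n k := by
    intro u y hy hmem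
    refine hδ₁S ?_ hmem
    rw [Metric.mem_thickening_iff]
    exact ⟨g₂ u, hg₂T u, by linarith⟩
  set hdiff : Euc n → Euc n := fun u => g₂ u - x with hhdiffdef
  have hdiffc : Continuous hdiff := hg₂c.sub continuous_const
  have hdiffs : HasCompactSupport hdiff := HasCompactSupport.intro hBk fun u hu => by
    simp [hhdiffdef, hg₂out u hu]
  obtain ⟨h', hh's, hh'cs, hh'close⟩ := smooth_approx hdiff hdiffc hdiffs
    (by positivity : (0:ℝ) < δ₁ / 2)
  set g₃ : Euc n → Euc n := fun u => x + h' u with hg₃def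
  have hg₃sm : ContDiff ℝ (⊤ : ℕ∞) g₃ := contDiff_const.add hh's
  have hg₂eq : ∀ u, g₂ u = x + hdiff u := fun u => by simp [hhdiffdef]
  have hg₃near : ∀ u, dist (g₃ u) (g₂ u) ≤ δ₁ / 2 := by
    intro u
    rw [hg₂eq u]
    calc dist (x + h' u) (x + hdiff u) = dist (h' u) (hdiff u) := dist_add_left _ _ _
      _ ≤ δ₁ / 2 := hh'close u
  have hg₃S : ∀ u, g₃ u ∉ SkSet n k := fun u => hnear u (g₃ u) (hg₃near u)
  set K₃ : Set (Euc n) := tsupport h' with hK₃def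
  have hK₃k : IsCompact K₃ := hh'cs
  have hg₃out : ∀ u ∉ K₃, g₃ u = x := fun u hu => by
    simp [hg₃def, image_eq_zero_of_notMem_tsupport hu]
  set F₃ := mkMap x hx g₃ hg₃sm.continuous hg₃S K₃ hK₃k hg₃out with hF₃def
  have hom2 : F₂.Homotopic F₃ := by
    refine homotopic_ext x hx F₂ F₃
      (fun p => g₂ p.2 + (p.1 : ℝ) • (g₃ p.2 - g₂ p.2)) ?_ ?_ ?_ ?_
      (mkMap_infty x hx g₂ hg₂c hg₂S B hBk hg₂out)
      (mkMap_infty x hx g₃ hg₃sm.continuous hg₃S K₃ hK₃k hg₃out) ?_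
    · exact (hg₂c.comp continuous_snd).add
        ((continuous_subtype_val.comp continuous_fst).smul
          ((hg₃sm.continuous.comp continuous_snd).sub (hg₂c.comp continuous_snd)))
    · rintro ⟨t, u⟩
      refine hnear u _ ?_
      have h2 : g₂ u + (t : ℝ) • (g₃ u - g₂ u) - g₂ u = (t : ℝ) • (g₃ u - g₂ u) := by abel
      rw [dist_eq_norm, h2, norm_smul, Real.norm_of_nonneg t.2.1]
      have h3 : ‖g₃ u - g₂ u‖ = dist (g₃ u) (g₂ u) := by rw [dist_eq_norm]
      nlinarith [norm_nonneg (g₃ u - g₂ u), h3 ▸ hg₃near u, t.2.1, t.2.2]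
    · intro u
      rw [mkMap_coe]
      norm_num
    · intro u
      rw [mkMap_coe]
      push_cast
      rw [one_smul]
      abel
    · intro ε hε
      refine ⟨B ∪ K₃, hBk.union hK₃k, fun t u hu => ?_⟩
      have h1 : g₂ u = x := hg₂out u fun h => hu (Or.inl h)
      have h2 : g₃ u = x := hg₃out u fun h => hu (Or.inr h)
      show dist (g₂ u + (t : ℝ) • (g₃ u - g₂ u)) x ≤ ε
      rw [h1, h2]
      simpa using hε.le
  -- derivative bound
  have hfdc : Continuous (fderiv ℝ h') := hh's.continuous_fderiv (by simp)
  have hfds : HasCompactSupport (fderiv ℝ h') := hh'cs.fderiv (𝕜 := ℝ)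
  obtain ⟨M, hM⟩ := hfds.exists_bound_of_continuous hfdc
  have hM0 : 0 ≤ M := le_trans (norm_nonneg _) (hM 0)
  set ε₀ : ℝ := 1 / (2 * (M + 1)) with hε₀def
  have hε₀ : 0 < ε₀ := by positivity
  have hε₀le : ε₀ ≤ 1 := by
    rw [hε₀def, div_le_one (by positivity)]; linarith
  set c : ℝ := ε₀ * M with hcdef
  have hc0 : 0 ≤ c := by positivity
  have hc1 : c < 1 := by
    have h2 : (0:ℝ) < 2 * (M + 1) := by positivity
    rw [hcdef, hε₀def, one_div, inv_mul_eq_div, div_lt_one h2]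
    linarith
  set g : Euc n → Euc n := fun u => g₃ (ε₀ • u) with hgdef
  have hgsm : ContDiff ℝ (⊤ : ℕ∞) g := hg₃sm.comp (contDiff_id.const_smul ε₀)
  have hgS : ∀ u, g u ∉ SkSet n k := fun u => hg₃S _
  have hg₃d : ∀ v : Euc n, HasFDerivAt g₃ (fderiv ℝ h' v) v := by
    intro v
    have h1 : HasFDerivAt h' (fderiv ℝ h' v) v :=
      (hh's.differentiable (by simp) v).hasFDerivAt
    simpa [hg₃def] using h1.const_add x
  have hgd : ∀ u : Euc n, HasFDerivAt g
      ((fderiv ℝ h' (ε₀ • u)).comp (ε₀ • ContinuousLinearMap.id ℝ (Euc n))) u := by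
    intro u
    exact (hg₃d (ε₀ • u)).comp u ((hasFDerivAt_id u).const_smul ε₀)
  have hAg : ∀ u v : Euc n, ‖fderiv ℝ g u v‖ ≤ c * ‖v‖ := by
    intro u v
    rw [(hgd u).fderiv]
    have h1 : ((fderiv ℝ h' (ε₀ • u)).comp (ε₀ • ContinuousLinearMap.id ℝ (Euc n))) v
        = fderiv ℝ h' (ε₀ • u) (ε₀ • v) := rfl
    rw [h1]
    calc ‖fderiv ℝ h' (ε₀ • u) (ε₀ • v)‖ ≤ ‖fderiv ℝ h' (ε₀ • u)‖ * ‖ε₀ • v‖ :=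
        (fderiv ℝ h' (ε₀ • u)).le_opNorm _
      _ ≤ M * (ε₀ * ‖v‖) := by
          rw [norm_smul, Real.norm_of_nonneg hε₀.le]
          exact mul_le_mul (hM _) le_rfl (by positivity) hM0
      _ = c * ‖v‖ := by rw [hcdef]; ring
  obtain ⟨ρ, hρ1, hρ⟩ := hK₃k.isBounded.subset_closedBall_lt 0 0
  set K : Set (Euc n) := Metric.closedBall (0 : Euc n) (ρ / ε₀) with hKdef
  have hKk : IsCompact K := isCompact_closedBall _ _
  have hscale : ∀ (a : ℝ), ε₀ ≤ a → a ≤ 1 → ∀ u ∉ K, g₃ (a • u) = x := by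
    intro a ha1 _ u hu
    apply hg₃out
    intro hmem
    have h1 : ‖a • u‖ ≤ ρ := by
      simpa [Metric.mem_closedBall, dist_zero_right] using hρ hmem
    have h2 : ρ / ε₀ < ‖u‖ := by
      simpa [hKdef, Metric.mem_closedBall, dist_zero_right, not_le] using hu
    have h3 : ε₀ * ‖u‖ ≤ ‖a • u‖ := by
      rw [norm_smul, Real.norm_of_nonneg (le_trans hε₀.le ha1)]
      exact mul_le_mul_of_nonneg_right ha1 (norm_nonneg u)
    have h4 : ρ < ε₀ * ‖u‖ := by
      rw [div_lt_iff₀ hε₀] at h2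
      linarith
    linarith
  have hgout : ∀ u ∉ K, g u = x := fun u hu => hscale ε₀ le_rfl hε₀le u hu
  set F := mkMap x hx g hgsm.continuous hgS K hKk hgout with hFdef
  have hom3 : F₃.Homotopic F := by
    refine homotopic_ext x hx F₃ F
      (fun p => g₃ ((((1 : ℝ) - (p.1 : ℝ)) + (p.1 : ℝ) * ε₀) • p.2)) ?_ ?_ ?_ ?_
      (mkMap_infty x hx g₃ hg₃sm.continuous hg₃S K₃ hK₃k hg₃out)
      (mkMap_infty x hx g hgsm.continuous hgS K hKk hgout) ?_
    · exact hg₃sm.continuous.comp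
        (((continuous_const.sub (continuous_subtype_val.comp continuous_fst)).add
          ((continuous_subtype_val.comp continuous_fst).mul continuous_const)).smul
          continuous_snd)
    · rintro ⟨t, u⟩; exact hg₃S _
    · intro u
      rw [mkMap_coe]
      norm_num
    · intro u
      rw [mkMap_coe]
      push_cast
      rw [show ((1:ℝ) - 1 + 1 * ε₀) = ε₀ by ring]
    · intro ε hε
      refine ⟨K, hKk, fun t u hu => ?_⟩
      have ha1 : ε₀ ≤ (1 - (t : ℝ)) + (t : ℝ) * ε₀ := by nlinarith [t.2.1, t.2.2, hε₀le]
      have ha2 : (1 - (t : ℝ)) + (t : ℝ) * ε₀ ≤ 1 := by nlinarith [t.2.1, t.2.2, hε₀, hε₀le]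
      show dist (g₃ ((((1 : ℝ) - (t : ℝ)) + (t : ℝ) * ε₀) • u)) x ≤ ε
      rw [hscale _ ha1 ha2 u hu]
      simpa using hε.le
  -- the final embedding
  set A : Euc n → (Euc n →L[ℝ] Euc n) := fun u => fderiv ℝ g u with hAdef
  set f : Euc n → Euc n × Euc n := fun u => (g u, u) with hfdef
  have hfd : ∀ u : Euc n, HasFDerivAt f ((A u).prod (ContinuousLinearMap.id ℝ (Euc n))) u :=
    fun u => ((hgsm.differentiable (by simp) u).hasFDerivAt).prodMk (hasFDerivAt_id u)
  have hfderiv : ∀ u, fderiv ℝ f u = (A u).prod (ContinuousLinearMap.id ℝ (Euc n)) :=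
    fun u => (hfd u).fderiv
  refine ⟨f, K, ?_, ?_, ?_, hKk, ?_, ?_, ?_, F, ?_, ?_, ?_⟩
  · exact hgsm.prodMk contDiff_id
  · exact Function.LeftInverse.isEmbedding (f := Prod.snd) (g := f)
      (fun u => rfl) continuous_snd (hgsm.continuous.prodMk continuous_id)
  · intro u v w hvw
    rw [hfderiv u] at hvw
    simpa using congrArg Prod.snd hvw
  · intro u hu
    simp [hfdef, hgout u hu]
  · intro u
    rw [Submodule.eq_bot_iff]
    intro z hz
    obtain ⟨hz1, hz2⟩ := Submodule.mem_inf.1 hz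
    rw [hfderiv u] at hz1 hz2
    obtain ⟨v, hv⟩ := LinearMap.mem_range.1 hz1
    obtain ⟨y, hy, hJy⟩ := Submodule.mem_map.1 hz2
    obtain ⟨w, hw⟩ := LinearMap.mem_range.1 hy
    have hv1 : (A u v, v) = z := by
      simpa [ContinuousLinearMap.prod_apply] using hv
    have hw1 : Jstd n (A u w, w) = z := by
      rw [← hw] at hJy
      simpa [ContinuousLinearMap.prod_apply] using hJy
    have hw2 : ((-w : Euc n), A u w) = z := by
      rw [← hw1]
      simp [Jstd, LinearMap.prod_apply]
    have e : (A u v, v) = ((-w : Euc n), A u w) := hv1.trans hw2.symm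
    have e1 : A u v = -w := congrArg Prod.fst e
    have e2 : v = A u w := congrArg Prod.snd e
    have n1 : ‖v‖ ≤ c * ‖w‖ := by
      rw [e2]
      simpa [hAdef] using hAg u w
    have n2 : ‖w‖ ≤ c * ‖v‖ := by
      have h2 := hAg u v
      rw [show fderiv ℝ g u v = A u v from rfl, e1, norm_neg] at h2
      exact h2
    have hv0 : v = 0 := by
      have h2 : ‖v‖ ≤ 0 := by
        nlinarith [norm_nonneg v, norm_nonneg w, mul_le_mul_of_nonneg_left n2 hc0]
      exact norm_le_zero_iff.1 h2
    rw [← hv1, hv0]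
    simp
  · intro u
    exact hgS u
  · intro u
    rfl
  · rfl
  · exact ((hom1.trans hom2).trans hom3).symm
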